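/- Let Λ ⊆ ℝ^N be a Delone set satisfying positivity of weights (PW) with constant w := inf{ν(P) : P a ball pattern with r(P) ≥ 1} > 0, and satisfying uniformity of return words (U). Let P = (x₀,R) be a ball pattern on Λ with R = r(P) ≥ 3. Then for every x ∈ L_P the inner radius of the Voronoi cell of x in the locater set L_P satisfies r_in(V_x(L_P)) ≤ cR, where c = max(2, 4·exp(6^N/(2wN))). -/

import Mathlib

open Filter MeasureTheory Bornology
open scoped ENNReal

noncomputable section

/-- Euclidean space `ℝ^N`. -/
abbrev Euc (N : ℕ) := EuclideanSpace ℝ (Fin N)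

/-- The packing radius of a set: half of the infimum of distances between
distinct points (`⊤` if no such pair exists). -/
def rPack {N : ℕ} (Λ : Set (Euc N)) : ℝ≥0∞ :=
  ⨅ (x ∈ Λ) (y ∈ Λ) (_ : x ≠ y), edist x y / 2

/-- The covering radius of a set: the supremum over all points of the space of
the distance to the set. -/
def rCov {N : ℕ} (Λ : Set (Euc N)) : ℝ≥0∞ :=
  ⨆ p : Euc N, EMetric.infEdist p Λ

/-- A set is uniformly discrete if its packing radius is positive. -/
def UniformlyDiscrete {N : ℕ} (Λ : Set (Euc N)) : Prop := 0 < rPack Λ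

/-- A set is relatively dense if its covering radius is finite. -/
def RelativelyDense {N : ℕ} (Λ : Set (Euc N)) : Prop := rCov Λ < ⊤

/-- A Delone set is a uniformly discrete and relatively dense set. -/
def IsDelone {N : ℕ} (Λ : Set (Euc N)) : Prop :=
  UniformlyDiscrete Λ ∧ RelativelyDense Λ

/-- Λ is non-periodic if no nonzero translate of Λ equals Λ. -/
def NonPeriodic {N : ℕ} (Λ : Set (Euc N)) : Prop :=
  ∀ t : Euc N, t ≠ 0 → (fun p => p - t) '' Λ ≠ Λ

/-- The patch of the ball pattern `(x, R)`: `(Λ - x) ∩ B_R`. -/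
def patch {N : ℕ} (Λ : Set (Euc N)) (x : Euc N) (R : ℝ) : Set (Euc N) :=
  ((fun y => y - x) '' Λ) ∩ Metric.closedBall 0 R

/-- The locater set of the ball pattern `(x, R)`: the set of points of Λ whose
`R`-patch agrees with that of `x`. -/
def locSet {N : ℕ} (Λ : Set (Euc N)) (x : Euc N) (R : ℝ) : Set (Euc N) :=
  {y ∈ Λ | patch Λ y R = patch Λ x R}

/-- Λ is repetitive if the locater set of every ball pattern is relatively dense. -/
def Repetitive {N : ℕ} (Λ : Set (Euc N)) : Prop :=
  ∀ x ∈ Λ, ∀ R : ℝ, 0 < R → RelativelyDense (locSet Λ x R)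

/-- `L_P(Q)`: the points of the locater set of `(x,R)` whose `R`-ball lies inside `Q`. -/
def locIn {N : ℕ} (Λ : Set (Euc N)) (x : Euc N) (R : ℝ) (Q : Set (Euc N)) :
    Set (Euc N) :=
  {y ∈ locSet Λ x R | Metric.closedBall y R ⊆ Q}

/-- `♯_P Q`: the number of copies of the ball pattern `P = (x,R)` in `Q`. -/
def countP {N : ℕ} (Λ : Set (Euc N)) (x : Euc N) (R : ℝ) (Q : Set (Euc N)) : ℕ :=
  (locIn Λ x R Q).ncard

/-- `♯'_P Q`: the maximal number of completely disjoint copies of `P = (x,R)` in `Q`. -/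
def countP' {N : ℕ} (Λ : Set (Euc N)) (x : Euc N) (R : ℝ) (Q : Set (Euc N)) : ℕ :=
  sSup {n : ℕ | ∃ A : Finset (Euc N), ↑A ⊆ locIn Λ x R Q ∧
    (∀ u ∈ A, ∀ v ∈ A, u ≠ v → 2 * R < dist u v) ∧ A.card = n}

/-- The cube with corner `a` and sidelength `s`. -/
def cube {N : ℕ} (a : Euc N) (s : ℝ) : Set (Euc N) :=
  {p | ∀ i, a i ≤ p i ∧ p i ≤ a i + s}

/-- The filter describing cubes `C` with `|C| → ∞`: arbitrary corner, sidelength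
tending to infinity. -/
def cubeFilter (N : ℕ) : Filter (Euc N × ℝ) := (⊤ : Filter (Euc N)) ×ˢ atTop

/-- The Lebesgue measure `|B_R|` of a closed ball of radius `R` in `ℝ^N`. -/
def ballVol (N : ℕ) (R : ℝ) : ℝ := (volume (Metric.closedBall (0 : Euc N) R)).toReal

/-- The lower density `ν(P)` of the ball pattern `P = (x,R)`:
`liminf_{|C|→∞} ♯_P C · |B_R| / |C|` over cubes `C`. -/
def nu {N : ℕ} (Λ : Set (Euc N)) (x : Euc N) (R : ℝ) : ℝ :=
  liminf (fun cs : Euc N × ℝ =>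
    (countP Λ x R (cube cs.1 cs.2) : ℝ) * ballVol N R / cs.2 ^ N) (cubeFilter N)

/-- The lower reduced density `ν'(P)` of the ball pattern `P = (x,R)`:
`liminf_{|C|→∞} ♯'_P C · |B_R| / |C|` over cubes `C`. -/
def nu' {N : ℕ} (Λ : Set (Euc N)) (x : Euc N) (R : ℝ) : ℝ :=
  liminf (fun cs : Euc N × ℝ =>
    (countP' Λ x R (cube cs.1 cs.2) : ℝ) * ballVol N R / cs.2 ^ N) (cubeFilter N)

/-- `w = inf {ν(P) : r(P) ≥ 1}`. -/
def wPW {N : ℕ} (Λ : Set (Euc N)) : ℝ :=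
  sInf {v | ∃ x ∈ Λ, ∃ R : ℝ, 1 ≤ R ∧ v = nu Λ x R}

/-- `w' = inf {ν'(P) : r(P) ≥ 1}`. -/
def wPQ {N : ℕ} (Λ : Set (Euc N)) : ℝ :=
  sInf {v | ∃ x ∈ Λ, ∃ R : ℝ, 1 ≤ R ∧ v = nu' Λ x R}

/-- Positivity of weights (PW). -/
def PW {N : ℕ} (Λ : Set (Euc N)) : Prop := 0 < wPW Λ

/-- Positivity of quasiweights (PQ). -/
def PQ {N : ℕ} (Λ : Set (Euc N)) : Prop := 0 < wPQ Λ

/-- A function on (bounded) subsets of `ℝ^N` is subadditive if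
`F(Q₁ ∪ Q₂) ≤ F(Q₁) + F(Q₂)` for disjoint bounded `Q₁, Q₂`. -/
def SubadditiveFn {N : ℕ} (F : Set (Euc N) → ℝ) : Prop :=
  ∀ Q₁ Q₂ : Set (Euc N), IsBounded Q₁ → IsBounded Q₂ → Disjoint Q₁ Q₂ →
    F (Q₁ ∪ Q₂) ≤ F Q₁ + F Q₂

/-- A function on (bounded) subsets is Λ-invariant if `F(Q) = F(t + Q)` whenever
`t + (Q ∩ Λ) = (t + Q) ∩ Λ`. -/
def InvariantFn {N : ℕ} (Λ : Set (Euc N)) (F : Set (Euc N) → ℝ) : Prop :=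
  ∀ (t : Euc N) (Q : Set (Euc N)), IsBounded Q →
    (fun p => t + p) '' (Q ∩ Λ) = ((fun p => t + p) '' Q) ∩ Λ →
    F Q = F ((fun p => t + p) '' Q)

/-- Λ satisfies the subadditive ergodic theorem (SET) if for every subadditive
Λ-invariant function `F` the limit `lim_{|C|→∞} F(C)/|C|` over cubes exists. -/
def SET {N : ℕ} (Λ : Set (Euc N)) : Prop :=
  ∀ F : Set (Euc N) → ℝ, SubadditiveFn F → InvariantFn Λ F →
    ∃ L : ℝ, Tendsto (fun cs : Euc N × ℝ => F (cube cs.1 cs.2) / cs.2 ^ N)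
      (cubeFilter N) (nhds L)

/-- Linear repetitivity (LR): `sup {r_cov(L_P)/r(P) : r(P) ≥ 1} < ∞`. -/
def LR {N : ℕ} (Λ : Set (Euc N)) : Prop :=
  (⨆ (x ∈ Λ) (R : ℝ) (_ : 1 ≤ R), rCov (locSet Λ x R) / ENNReal.ofReal R) < ⊤

/-- The repulsion property (RP): `inf {r_pack(L_P)/r(P) : P a ball pattern} > 0`. -/
def RP {N : ℕ} (Λ : Set (Euc N)) : Prop :=
  0 < ⨅ (x ∈ Λ) (R : ℝ) (_ : 0 < R), rPack (locSet Λ x R) / ENNReal.ofReal R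

/-- The Voronoi cell of `x` with respect to `Γ`. -/
def voronoiCell {N : ℕ} (Γ : Set (Euc N)) (x : Euc N) : Set (Euc N) :=
  {p | ∀ y ∈ Γ, dist p x ≤ dist p y}

/-- The inner radius of a set `V` around `x`. -/
def rIn {N : ℕ} (x : Euc N) (V : Set (Euc N)) : ℝ≥0∞ :=
  sSup {R : ℝ≥0∞ | EMetric.closedBall x R ⊆ V}

/-- The outer radius of a set `V` around `x`. -/
def rOut {N : ℕ} (x : Euc N) (V : Set (Euc N)) : ℝ≥0∞ :=
  sInf {R : ℝ≥0∞ | V ⊆ EMetric.closedBall x R}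

/-- The distortion `λ(V) = r_out(V)/r_in(V)` of a set `V` around `x`. -/
def distortion {N : ℕ} (x : Euc N) (V : Set (Euc N)) : ℝ≥0∞ := rOut x V / rIn x V

/-- The distortion of a discrete set: the supremum of the distortions of its
Voronoi cells. -/
def setDistortion {N : ℕ} (Γ : Set (Euc N)) : ℝ≥0∞ :=
  ⨆ x ∈ Γ, distortion x (voronoiCell Γ x)

/-- Uniformity of return words (U): the distortions of all locater sets of Λ are
uniformly bounded. -/
def URW {N : ℕ} (Λ : Set (Euc N)) : Prop :=
  (⨆ (x ∈ Λ) (R : ℝ) (_ : 0 < R), setDistortion (locSet Λ x R)) < ⊤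

end
section AuxPatch

variable {N : ℕ}

lemma mem_sub_image {Λ : Set (Euc N)} {x v : Euc N} :
    v ∈ (fun y => y - x) '' Λ ↔ v + x ∈ Λ := by
  constructor
  · rintro ⟨y, hy, rfl⟩; rwa [sub_add_cancel]
  · intro h; exact ⟨v + x, h, add_sub_cancel_right _ _⟩

lemma mem_patch {Λ : Set (Euc N)} {x v : Euc N} {R : ℝ} :
    v ∈ patch Λ x R ↔ (v + x ∈ Λ ∧ ‖v‖ ≤ R) := by
  rw [patch, Set.mem_inter_iff, mem_sub_image, Metric.mem_closedBall, dist_zero_right]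

lemma locSet_subset (Λ : Set (Euc N)) (x : Euc N) (R : ℝ) : locSet Λ x R ⊆ Λ :=
  fun _ hy => hy.1

lemma self_mem_locSet {Λ : Set (Euc N)} {x : Euc N} (hx : x ∈ Λ) (R : ℝ) :
    x ∈ locSet Λ x R := ⟨hx, rfl⟩

lemma patch_inter (Λ : Set (Euc N)) (y : Euc N) {R s : ℝ} (h : R ≤ s) :
    patch Λ y R = patch Λ y s ∩ Metric.closedBall 0 R := by
  unfold patch
  rw [Set.inter_assoc, Set.inter_eq_right.2 (Metric.closedBall_subset_closedBall h)]

lemma locSet_anti {Λ : Set (Euc N)} {x : Euc N} {R s : ℝ} (h : R ≤ s) :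
    locSet Λ x s ⊆ locSet Λ x R := by
  rintro y ⟨hy, hp⟩
  exact ⟨hy, by rw [patch_inter Λ y h, patch_inter Λ x h, hp]⟩

lemma locSet_trans {Λ : Set (Euc N)} {x₀ x : Euc N} {R s : ℝ} (hs : R ≤ s)
    (hx : x ∈ locSet Λ x₀ R) : locSet Λ x s ⊆ locSet Λ x₀ R := by
  rintro y hy
  obtain ⟨hy', hp⟩ := locSet_anti hs hy
  exact ⟨hy', hp.trans hx.2⟩

lemma patch_transfer {Λ : Set (Euc N)} {y x z : Euc N} {s R : ℝ} (hR : 0 ≤ R)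
    (hy : y ∈ locSet Λ x s) (hz : z ∈ Λ) (hd : dist z y + R ≤ s) :
    z - y + x ∈ Λ ∧ patch Λ z R = patch Λ (z - y + x) R := by
  have hp := hy.2
  have hdist : ‖z - y‖ ≤ s := by
    rw [← dist_eq_norm]; linarith
  have hmem : z - y ∈ patch Λ x s := by
    rw [← hp, mem_patch]
    exact ⟨by simpa using hz, hdist⟩
  have hu : z - y + x ∈ Λ := (mem_patch.1 hmem).1
  refine ⟨hu, ?_⟩
  ext v
  rw [mem_patch, mem_patch]
  constructor
  · rintro ⟨hvz, hv⟩
    refine ⟨?_, hv⟩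
    have h1 : v + z - y ∈ patch Λ x s := by
      rw [← hp, mem_patch]
      constructor
      · simpa using hvz
      · calc ‖v + z - y‖ = ‖v + (z - y)‖ := by abel_nf
          _ ≤ ‖v‖ + ‖z - y‖ := norm_add_le _ _
          _ ≤ R + (s - R) := by
              have : ‖z - y‖ ≤ s - R := by rw [← dist_eq_norm]; linarith
              linarith
          _ = s := by ring
    have := (mem_patch.1 h1).1
    have heq : v + z - y + x = v + (z - y + x) := by abel
    rwa [heq] at this
  · rintro ⟨hvu, hv⟩
    refine ⟨?_, hv⟩
    have h1 : v + (z - y) ∈ patch Λ y s := by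
      rw [hp, mem_patch]
      constructor
      · have heq : v + (z - y) + x = v + (z - y + x) := by abel
        rw [heq]; exact hvu
      · calc ‖v + (z - y)‖ ≤ ‖v‖ + ‖z - y‖ := norm_add_le _ _
          _ ≤ s := by
              have : ‖z - y‖ ≤ s - R := by rw [← dist_eq_norm]; linarith
              linarith
    have := (mem_patch.1 h1).1
    have heq : v + (z - y) + y = v + z := by abel
    rwa [heq] at this

end AuxPatch
section AuxVolume

variable {N : ℕ}

lemma cube_eq (a : Euc N) (σ : ℝ) :
    cube a σ = (MeasurableEquiv.toLp 2 (Fin N → ℝ)).symm ⁻¹'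
      (Set.univ.pi fun i => Set.Icc (a i) (a i + σ)) := by
  ext p
  simp only [cube, Set.mem_setOf_eq, Set.mem_preimage, Set.mem_pi, Set.mem_univ,
    true_implies, Set.mem_Icc]
  rfl

lemma volume_cube (a : Euc N) {σ : ℝ} (hσ : 0 ≤ σ) :
    volume (cube a σ) = ENNReal.ofReal (σ ^ N) := by
  rw [cube_eq, (EuclideanSpace.volume_preserving_symm_measurableEquiv_toLp (Fin N)).measure_preimage
    (MeasurableSet.univ_pi (fun i => measurableSet_Icc)).nullMeasurableSet]
  rw [volume_pi_pi]
  simp [Real.volume_Icc, ← ENNReal.ofReal_pow hσ]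

lemma volume_closedBall' (y : Euc N) {r : ℝ} (hr : 0 ≤ r) :
    volume (Metric.closedBall y r)
      = ENNReal.ofReal (r ^ N) * volume (Metric.ball (0 : Euc N) 1) := by
  rw [MeasureTheory.Measure.addHaar_closedBall volume y hr, finrank_euclideanSpace_fin]

lemma ballVol_eq {r : ℝ} (hr : 0 ≤ r) :
    ballVol N r = r ^ N * (volume (Metric.ball (0 : Euc N) 1)).toReal := by
  rw [ballVol, volume_closedBall' 0 hr, ENNReal.toReal_mul, ENNReal.toReal_ofReal (by positivity)]

lemma unitBallVol_pos (hN : 0 < N) :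
    0 < (volume (Metric.ball (0 : Euc N) 1)).toReal := by
  haveI : Nontrivial (Euc N) :=
    ⟨0, EuclideanSpace.single ⟨0, hN⟩ 1, fun h => by simpa using congrArg (fun v => v ⟨0, hN⟩) h⟩
  refine ENNReal.toReal_pos (Metric.measure_ball_pos volume 0 one_pos).ne' measure_ball_lt_top.ne

lemma packing_card {Q : Set (Euc N)} {r : ℝ} (hr : 0 ≤ r)
    {F : Finset (Euc N)} {ρ : Euc N → ℝ} (hρ : ∀ y ∈ F, 0 ≤ ρ y ∧ ρ y ≤ r)
    (hsub : ∀ y ∈ F, Metric.closedBall y (ρ y) ⊆ Q)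
    (hsep : ∀ y ∈ F, ∀ z ∈ F, y ≠ z → ρ y + ρ z < dist y z) :
    ∑ y ∈ F, ENNReal.ofReal (ρ y ^ N) * volume (Metric.ball (0 : Euc N) 1) ≤ volume Q := by
  have hdisj : (↑F : Set (Euc N)).PairwiseDisjoint (fun y => Metric.closedBall y (ρ y)) := by
    intro y hy z hz hyz
    exact Metric.closedBall_disjoint_closedBall (hsep y hy z hz hyz)
  calc ∑ y ∈ F, ENNReal.ofReal (ρ y ^ N) * volume (Metric.ball (0 : Euc N) 1)
      = ∑ y ∈ F, volume (Metric.closedBall y (ρ y)) := by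
        refine Finset.sum_congr rfl fun y hy => ?_
        rw [volume_closedBall' y (hρ y hy).1]
    _ = volume (⋃ y ∈ F, Metric.closedBall y (ρ y)) :=
        (measure_biUnion_finset hdisj fun y _ => measurableSet_closedBall).symm
    _ ≤ volume Q := by
        refine measure_mono ?_
        exact Set.iUnion₂_subset hsub

lemma finite_of_packing (hN : 0 < N) {D Q : Set (Euc N)} {r : ℝ} (hr : 0 < r)
    (hQ : volume Q ≠ ⊤)
    (hsub : ∀ y ∈ D, Metric.closedBall y r ⊆ Q)
    (hsep : ∀ y ∈ D, ∀ z ∈ D, y ≠ z → 2 * r < dist y z) : D.Finite := by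
  by_contra h
  replace h : D.Infinite := h
  set V : ℝ≥0∞ := ENNReal.ofReal (r ^ N) * volume (Metric.ball (0 : Euc N) 1) with hV
  have hV0 : V ≠ 0 := by
    haveI : Nontrivial (Euc N) :=
      ⟨0, EuclideanSpace.single ⟨0, hN⟩ 1, fun h => by simpa using congrArg (fun v => v ⟨0, hN⟩) h⟩
    simp only [hV, ne_eq, mul_eq_zero, not_or]
    exact ⟨by simp [ENNReal.ofReal_eq_zero, not_le]; positivity,
      (Metric.measure_ball_pos volume 0 one_pos).ne'⟩
  have hdivtop : volume Q / V ≠ ⊤ := by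
    exact (ENNReal.div_lt_top hQ hV0).ne
  obtain ⟨n, hn⟩ := ENNReal.exists_nat_gt hdivtop
  obtain ⟨F, hFsub, hFcard⟩ := h.exists_subset_card_eq n
  have hb : ∑ y ∈ F, ENNReal.ofReal (r ^ N) * volume (Metric.ball (0 : Euc N) 1) ≤ volume Q := by
    refine packing_card hr.le (fun y _ => ⟨hr.le, le_rfl⟩)
      (fun y hy => hsub y (hFsub hy)) (fun y hy z hz hyz => ?_)
    have := hsep y (hFsub hy) z (hFsub hz) hyz
    linarith
  rw [Finset.sum_const, hFcard, nsmul_eq_mul] at hb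
  have hlt : volume Q < (n : ℝ≥0∞) * V := by
    rwa [ENNReal.div_lt_iff (Or.inl hV0) (Or.inr hQ)] at hn
  exact absurd (hb.trans_lt hlt) (by simp [hV])

end AuxVolume
section AuxDensity

variable {N : ℕ}

lemma cubeFilter_neBot (N : ℕ) : (cubeFilter N).NeBot := by
  rw [cubeFilter]
  have h1 : (⊤ : Filter (Euc N)).NeBot := by
    rw [← Filter.principal_univ]
    exact Set.univ_nonempty.principal_neBot
  exact Filter.prod_neBot.2 ⟨h1, Filter.atTop_neBot⟩

lemma f_nonneg_event (Λ : Set (Euc N)) (x : Euc N) (R : ℝ) :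
    ∀ᶠ p in cubeFilter N,
      0 ≤ (countP Λ x R (cube p.1 p.2) : ℝ) * ballVol N R / p.2 ^ N := by
  rw [cubeFilter]
  refine Filter.mem_of_superset
    (Filter.prod_mem_prod (Filter.univ_mem) (Filter.Ici_mem_atTop 1)) ?_
  rintro ⟨a, σ⟩ ⟨-, hσ⟩
  have hσ' : (0:ℝ) < σ := lt_of_lt_of_le one_pos hσ
  have h1 : (0:ℝ) ≤ ballVol N R := ENNReal.toReal_nonneg
  exact div_nonneg (mul_nonneg (Nat.cast_nonneg _) h1) (by positivity)

lemma nu_nonneg (Λ : Set (Euc N)) (x : Euc N) (R : ℝ) : 0 ≤ nu Λ x R := by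
  rw [nu, Filter.liminf_eq]
  set S := {a : ℝ | ∀ᶠ p in cubeFilter N,
    a ≤ (countP Λ x R (cube p.1 p.2) : ℝ) * ballVol N R / p.2 ^ N} with hS
  by_cases hbdd : BddAbove S
  · exact le_csSup hbdd (f_nonneg_event Λ x R)
  · rw [Real.sSup_of_not_bddAbove hbdd]

lemma wPW_le_nu {Λ : Set (Euc N)} {x : Euc N} (hx : x ∈ Λ) {R : ℝ} (hR : 1 ≤ R) :
    wPW Λ ≤ nu Λ x R := by
  refine csInf_le ⟨0, ?_⟩ ⟨x, hx, R, hR, rfl⟩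
  rintro v ⟨x', hx', R', hR', rfl⟩
  exact nu_nonneg Λ x' R'

lemma eventually_count {Λ : Set (Euc N)} (hPW : PW Λ) {x : Euc N} (hx : x ∈ Λ)
    {s : ℝ} (hs : 1 ≤ s) :
    ∀ᶠ p in cubeFilter N,
      9 / 10 * wPW Λ < (countP Λ x s (cube p.1 p.2) : ℝ) * ballVol N s / p.2 ^ N := by
  have hw : (0:ℝ) < wPW Λ := hPW
  have hlt : 9 / 10 * wPW Λ < nu Λ x s :=
    lt_of_lt_of_le (by nlinarith) (wPW_le_nu hx hs)
  exact Filter.eventually_lt_of_lt_liminf hlt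
    ⟨0, by simpa [Filter.eventually_map] using f_nonneg_event Λ x s⟩

end AuxDensity
section AuxReal

lemma pow_diff_bound {n : ℕ} (hn : 0 < n) {a b : ℝ} (hb : 0 ≤ b) (hab : b ≤ a) :
    (n : ℝ) * b ^ (n - 1) * (a - b) ≤ a ^ n - b ^ n := by
  rw [← geom_sum₂_mul a b n]
  have hsum : (n : ℝ) * b ^ (n - 1) ≤ ∑ i ∈ Finset.range n, a ^ i * b ^ (n - 1 - i) := by
    calc (n : ℝ) * b ^ (n - 1) = ∑ _i ∈ Finset.range n, b ^ (n - 1) := by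
          rw [Finset.sum_const, Finset.card_range, nsmul_eq_mul]
      _ ≤ ∑ i ∈ Finset.range n, a ^ i * b ^ (n - 1 - i) := by
          refine Finset.sum_le_sum fun i hi => ?_
          have hin : i ≤ n - 1 := Nat.le_sub_one_of_lt (Finset.mem_range.1 hi)
          have : b ^ (n - 1) = b ^ i * b ^ (n - 1 - i) := by
            rw [← pow_add]; congr 1; omega
          rw [this]
          exact mul_le_mul_of_nonneg_right (pow_le_pow_left₀ hb hab i) (by positivity)
  exact mul_le_mul_of_nonneg_right hsum (by linarith)

lemma ineq50 : ∀ n : ℕ, 50 * (15/4 : ℝ) ^ n ≤ 9 * 6 ^ (n + 1) := by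
  intro n
  induction n with
  | zero => norm_num
  | succ k ih =>
      have h : (15/4 : ℝ) ^ (k+1) = (15/4) * (15/4)^k := by ring
      have h6 : (6 : ℝ) ^ (k+2) = 6 * 6 ^ (k+1) := by ring
      rw [h, h6]
      nlinarith [pow_nonneg (by norm_num : (0:ℝ) ≤ 15/4) k, pow_nonneg (by norm_num : (0:ℝ) ≤ 6) (k+1)]

lemma log_five_quarters : Real.log (5/4) ≤ 1/4 := by
  have := Real.log_le_sub_one_of_pos (by norm_num : (0:ℝ) < 5/4)
  linarith

lemma log_four_thirds : (1/4 : ℝ) ≤ Real.log (4/3) := by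
  have h := Real.log_le_sub_one_of_pos (by norm_num : (0:ℝ) < 3/4)
  have h2 : Real.log (3/4) = - Real.log (4/3) := by
    rw [← Real.log_inv]; norm_num
  rw [h2] at h; linarith

end AuxReal
section AuxReal2

lemma exists_max_pow {x : ℝ} (hx : (5/4:ℝ) ≤ x) :
    ∃ K : ℕ, 1 ≤ K ∧ (5/4:ℝ)^K ≤ x ∧ x < (5/4)^(K+1) := by
  classical
  have hex : ∃ n, x < (5/4:ℝ)^n := pow_unbounded_of_one_lt x (by norm_num)
  have hspec : x < (5/4:ℝ)^(Nat.find hex) := Nat.find_spec hex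
  have hne0 : Nat.find hex ≠ 0 := by
    intro h; rw [h] at hspec; norm_num at hspec; linarith
  have hne1 : Nat.find hex ≠ 1 := by
    intro h; rw [h] at hspec; norm_num at hspec; linarith
  refine ⟨Nat.find hex - 1, by omega, ?_, ?_⟩
  · have := Nat.find_min hex (m := Nat.find hex - 1) (by omega)
    linarith [not_lt.1 this]
  · have h3 : Nat.find hex - 1 + 1 = Nat.find hex := by omega
    rw [h3]; exact hspec

lemma coeff_eq {N : ℕ} (hN : 0 < N) (t : ℝ) :
    ((N:ℝ)/10 * (4/15)^(N-1)) * (5/4*t)^N * 2^N = (N:ℝ) * (2/3*t)^(N-1) * (t/4) := by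
  obtain ⟨M, rfl⟩ : ∃ M, N = M + 1 := ⟨N - 1, by omega⟩
  simp only [Nat.add_sub_cancel]
  push_cast
  rw [pow_succ (5/4*t), pow_succ (2:ℝ), mul_pow (5/4:ℝ) t, mul_pow (2/3:ℝ) t]
  have e1 : (4/15:ℝ)^M * (5/4)^M = (1/3)^M := by rw [← mul_pow]; norm_num
  have e4 : (2/3:ℝ)^M = (1/3)^M * 2^M := by rw [← mul_pow]; norm_num
  linear_combination (((M:ℝ)+1) * t^M * t / 4 * 2^M) * e1
    - (((M:ℝ)+1) * t^M * t / 4) * e4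

lemma telescope (g : ℕ → ℝ) (mm : ℕ) :
    ∑ k ∈ Finset.Icc 1 mm, (g k - g (k-1)) = g mm - g 0 := by
  induction mm with
  | zero => simp
  | succ n ih =>
      rw [Finset.sum_Icc_succ_top (by omega : 1 ≤ n + 1), ih, Nat.succ_sub_one]
      ring

lemma incr_bound {N : ℕ} (hN : 0 < N) {R : ℝ} (hR0 : 0 < R) (j : ℕ) :
    ((N:ℝ)/10 * (4/15)^(N-1)) * (3*R*(5/4)^(j+1)) ^ N
      ≤ ((3*R*(5/4)^(j+1) - R)/2) ^ N - ((3*R*(5/4)^j - R)/2) ^ N := by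
  have hpj : (1:ℝ) ≤ (5/4)^j := one_le_pow₀ (by norm_num)
  set t : ℝ := 3*R*(5/4)^j with ht
  have ht0 : 0 < t := by positivity
  have h3R : 3*R ≤ t := by nlinarith
  have hsk : 3*R*(5/4:ℝ)^(j+1) = 5/4*t := by rw [ht, pow_succ]; ring
  rw [hsk]
  have hb0 : (0:ℝ) ≤ t - R := by linarith
  have hab : t - R ≤ 5/4*t - R := by linarith
  have hbt : 2/3*t ≤ t - R := by linarith
  have h2N : (0:ℝ) < 2^N := by positivity
  have hsplit : ((5/4*t - R)/2)^N - ((t-R)/2)^N = ((5/4*t-R)^N - (t-R)^N)/(2:ℝ)^N := by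
    rw [div_pow, div_pow, sub_div]
  rw [hsplit, le_div_iff₀ h2N]
  calc ((N:ℝ)/10 * (4/15)^(N-1)) * (5/4*t)^N * 2^N
      = (N:ℝ) * (2/3*t)^(N-1) * (t/4) := coeff_eq hN t
    _ ≤ (N:ℝ) * (t-R)^(N-1) * ((5/4*t-R) - (t-R)) := by
        have hpow : (2/3*t)^(N-1) ≤ (t-R)^(N-1) :=
          pow_le_pow_left₀ (by positivity) hbt (N-1)
        have heq : (5/4*t-R) - (t-R) = t/4 := by ring
        rw [heq]
        have ht4 : (0:ℝ) ≤ t/4 := by positivity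
        exact mul_le_mul_of_nonneg_right
          (mul_le_mul_of_nonneg_left hpow (Nat.cast_nonneg N)) ht4
    _ ≤ (5/4*t-R)^N - (t-R)^N := pow_diff_bound hN hb0 hab

end AuxReal2
section Key

lemma key {N : ℕ} (hN : 0 < N) (Λ : Set (Euc N)) (hPW : PW Λ)
    (x₀ : Euc N) (R : ℝ) (hR : 3 ≤ R) (x : Euc N) (hx : x ∈ locSet Λ x₀ R)
    (c : ℝ) (hcge : 4 * Real.exp ((6:ℝ)^N / (2 * wPW Λ * N)) ≤ c)
    (hiso : ∀ z ∈ locSet Λ x₀ R, dist z x ≤ c * R → z = x) : False := by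
  classical
  set w : ℝ := wPW Λ with hw_def
  have hw : 0 < w := hPW
  set E : ℝ := (6:ℝ)^N / (2 * w * N) with hE_def
  have hNR : (0:ℝ) < N := by exact_mod_cast hN
  have hE : 0 < E := by positivity
  have hexp : 1 < Real.exp E := by
    have := Real.add_one_le_exp E; linarith
  have hc4 : 4 < c := by nlinarith
  have hR0 : (0:ℝ) < R := by linarith
  have hxΛ : x ∈ Λ := hx.1
  -- choice of K
  obtain ⟨K, hK1, hKle, hKgt⟩ := exists_max_pow (x := c/3) (by linarith)
  -- scales
  set s : ℕ → ℝ := fun k => 3*R*(5/4)^k with hs_def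
  have hs_pos : ∀ k, 0 < s k := fun k => by positivity
  have hs3R : ∀ k, 3*R ≤ s k := by
    intro k
    have h1 : (1:ℝ) ≤ (5/4)^k := one_le_pow₀ (by norm_num)
    calc 3*R = 3*R*1 := by ring
      _ ≤ 3*R*(5/4)^k := by nlinarith
  have hs1 : ∀ k, 1 ≤ s k := fun k => by nlinarith [hs3R k]
  have hs_mono : ∀ j k, j ≤ k → s j ≤ s k := by
    intro j k hjk
    have := pow_le_pow_right₀ (by norm_num : (1:ℝ) ≤ 5/4) hjk
    simp only [hs_def]
    nlinarith
  have hsK : ∀ k, k ≤ K → s k ≤ c*R := by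
    intro k hk
    calc s k ≤ s K := hs_mono k K hk
      _ = 3*R*(5/4)^K := rfl
      _ ≤ 3*R*(c/3) := by nlinarith
      _ = c*R := by ring
  have hsub_loc : ∀ k, locSet Λ x (s k) ⊆ locSet Λ x₀ R := by
    intro k
    exact locSet_trans (by nlinarith [hs3R k]) hx
  -- separation
  have hsep : ∀ k, k ≤ K → ∀ y ∈ locSet Λ x (s k), ∀ z ∈ locSet Λ x₀ R,
      z ≠ y → s k - R < dist z y := by
    intro k hkK y hy z hz hne
    by_contra hle
    push_neg at hle
    have hd : dist z y + R ≤ s k := by linarith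
    obtain ⟨huΛ, hup⟩ := patch_transfer hR0.le hy hz.1 hd
    have hu : z - y + x ∈ locSet Λ x₀ R := ⟨huΛ, by rw [← hup]; exact hz.2⟩
    have hdist : dist (z - y + x) x ≤ c*R := by
      have h1 : z - y + x - x = z - y := by abel
      rw [dist_eq_norm, h1, ← dist_eq_norm]
      have := hsK k hkK
      linarith
    have heq := hiso _ hu hdist
    apply hne
    have : z - y = 0 := by
      have := congrArg (fun v => v - x) heq
      simpa using this
    have := sub_eq_zero.1 this
    exact this
  -- get a good cube
  haveI := cubeFilter_neBot N
  have hev : ∀ᶠ p in cubeFilter N,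
      (∀ k ∈ Finset.Icc 1 K, 9/10*w <
        (countP Λ x (s k) (cube p.1 p.2) : ℝ) * ballVol N (s k) / p.2^N) ∧ 1 ≤ p.2 := by
    refine Filter.Eventually.and ?_ ?_
    · exact (Filter.eventually_all_finset _).2
        (fun k _ => eventually_count hPW hxΛ (hs1 k))
    · rw [cubeFilter]
      refine Filter.mem_of_superset
        (Filter.prod_mem_prod (Filter.univ_mem) (Filter.Ici_mem_atTop 1)) ?_
      rintro ⟨a, σ⟩ ⟨-, hσ⟩
      exact hσ
  obtain ⟨p, hp, hσ1⟩ := hev.exists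
  set a := p.1
  set σ := p.2
  have hσ0 : (0:ℝ) < σ := lt_of_lt_of_le one_pos hσ1
  set Q := cube a σ with hQ_def
  have hvolQ : volume Q = ENNReal.ofReal (σ^N) := volume_cube a hσ0.le
  -- the sets of copies
  set A : ℕ → Set (Euc N) := fun k => locIn Λ x (s k) Q with hA_def
  have hA_loc : ∀ k, A k ⊆ locSet Λ x (s k) := fun k y hy => hy.1
  have hA_ball : ∀ k, ∀ y ∈ A k, Metric.closedBall y (s k) ⊆ Q := fun k y hy => hy.2
  have hA_nest : ∀ j k, j ≤ k → A k ⊆ A j := by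
    intro j k hjk y hy
    exact ⟨locSet_anti (hs_mono j k hjk) hy.1,
      (Metric.closedBall_subset_closedBall (hs_mono j k hjk)).trans hy.2⟩
  set r : ℕ → ℝ := fun k => (s k - R)/2 with hr_def
  have hr_pos : ∀ k, 0 < r k := by
    intro k; have := hs3R k; simp only [hr_def]; linarith
  have hr_mono : ∀ j k, j ≤ k → r j ≤ r k := by
    intro j k hjk; have := hs_mono j k hjk; simp only [hr_def]; linarith
  have hrs : ∀ k, r k ≤ s k := by
    intro k; have := hs3R k; simp only [hr_def]; linarith
  have hsepA : ∀ k, k ≤ K → ∀ y ∈ A k, ∀ z ∈ locSet Λ x₀ R, z ≠ y →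
      2 * r k < dist z y := by
    intro k hk y hy z hz hne
    have := hsep k hk y (hA_loc k hy) z hz hne
    simp only [hr_def]; linarith
  -- finiteness
  have hfin : (A 1).Finite := by
    refine finite_of_packing hN (hr_pos 1) (by rw [hvolQ]; exact ENNReal.ofReal_ne_top) ?_ ?_
    · intro y hy
      exact (Metric.closedBall_subset_closedBall (hrs 1)).trans (hA_ball 1 y hy)
    · intro y hy z hz hyz
      exact hsepA 1 hK1 z hz y (hsub_loc 1 (hA_loc 1 hy)) hyz
  set F₁ : Finset (Euc N) := hfin.toFinset with hF₁_def
  set F : ℕ → Finset (Euc N) := fun k => F₁.filter (· ∈ A k) with hF_def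
  have hF₁A : ∀ y, y ∈ F₁ ↔ y ∈ A 1 := fun y => Set.Finite.mem_toFinset hfin
  have hFcoe : ∀ k, 1 ≤ k → ((F k : Finset (Euc N)) : Set (Euc N)) = A k := by
    intro k hk
    ext y
    simp only [hF_def, Finset.coe_filter, Set.mem_setOf_eq, hF₁A]
    exact ⟨fun h => h.2, fun h => ⟨hA_nest 1 k hk h, h⟩⟩
  -- count lower bounds
  set κ : ℝ := (volume (Metric.ball (0 : Euc N) 1)).toReal with hκ_def
  have hκ0 : 0 < κ := unitBallVol_pos hN
  have hFcard : ∀ k ∈ Finset.Icc 1 K,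
      9/10*w * σ^N / (s k ^ N * κ) ≤ ((F k).card : ℝ) := by
    intro k hk
    obtain ⟨hk1, hkK⟩ := Finset.mem_Icc.1 hk
    have hcnt := hp k hk
    have hbV : ballVol N (s k) = s k ^ N * κ := ballVol_eq (hs_pos k).le
    have hcard_eq : (countP Λ x (s k) Q : ℝ) = ((F k).card : ℝ) := by
      have : countP Λ x (s k) Q = (A k).ncard := rfl
      rw [this, ← hFcoe k hk1, Set.ncard_coe_finset]
    rw [hbV] at hcnt
    have hσN : (0:ℝ) < σ^N := by positivity
    have hsκ : (0:ℝ) < s k ^ N * κ := by positivity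
    rw [div_le_iff₀ hsκ]
    have := (lt_div_iff₀ hσN).1 hcnt
    rw [hcard_eq] at this
    linarith
  -- the max-scale function
  set m : Euc N → ℕ := fun y => ((Finset.Icc 1 K).filter (fun k => y ∈ A k)).sup id with hm_def
  have hm_ne : ∀ y ∈ F₁, ((Finset.Icc 1 K).filter (fun k => y ∈ A k)).Nonempty := by
    intro y hy
    exact ⟨1, Finset.mem_filter.2 ⟨Finset.mem_Icc.2 ⟨le_refl 1, hK1⟩, (hF₁A y).1 hy⟩⟩
  have hm_mem : ∀ y ∈ F₁, m y ∈ ((Finset.Icc 1 K).filter (fun k => y ∈ A k)) := by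
    intro y hy
    have h1 : m y = ((Finset.Icc 1 K).filter (fun k => y ∈ A k)).max' (hm_ne y hy) := by
      rw [Finset.max'_eq_sup', Finset.sup'_eq_sup]
    rw [h1]
    exact Finset.max'_mem _ _
  have hm_A : ∀ y ∈ F₁, y ∈ A (m y) := by
    intro y hy
    exact (Finset.mem_filter.1 (hm_mem y hy)).2
  have hm_Icc : ∀ y ∈ F₁, 1 ≤ m y ∧ m y ≤ K := by
    intro y hy
    exact Finset.mem_Icc.1 (Finset.mem_filter.1 (hm_mem y hy)).1
  have hm_iff : ∀ y ∈ F₁, ∀ k, 1 ≤ k → k ≤ K → (k ≤ m y ↔ y ∈ A k) := by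
    intro y hy k hk1 hkK
    constructor
    · intro hkm
      exact hA_nest k (m y) hkm (hm_A y hy)
    · intro hyA
      exact Finset.le_sup (f := id) (Finset.mem_filter.2 ⟨Finset.mem_Icc.2 ⟨hk1, hkK⟩, hyA⟩)
  -- disjoint balls packing
  have hpack : ∑ y ∈ F₁, ENNReal.ofReal (r (m y) ^ N) * volume (Metric.ball (0 : Euc N) 1)
      ≤ volume Q := by
    refine packing_card (r := r K) (hr_pos K).le ?_ ?_ ?_
    · intro y hy
      exact ⟨(hr_pos (m y)).le, hr_mono (m y) K (hm_Icc y hy).2⟩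
    · intro y hy
      exact (Metric.closedBall_subset_closedBall ((hrs (m y)))).trans
        (hA_ball (m y) y (hm_A y hy))
    · intro y hy z hz hyz
      rcases le_total (m y) (m z) with hle | hle
      · have h2 := hsepA (m z) (hm_Icc z hz).2 z (hm_A z hz) y
          (hsub_loc 1 (hA_loc 1 ((hF₁A y).1 hy))) hyz
        have := hr_mono (m y) (m z) hle
        linarith
      · have h2 := hsepA (m y) (hm_Icc y hy).2 y (hm_A y hy) z
          (hsub_loc 1 (hA_loc 1 ((hF₁A z).1 hz))) (Ne.symm hyz)
        have := hr_mono (m z) (m y) hle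
        rw [dist_comm] at h2
        linarith
  -- convert to real
  have hsum_real : ∑ y ∈ F₁, r (m y) ^ N * κ ≤ σ^N := by
    have hne_top : ∀ y ∈ F₁,
        ENNReal.ofReal (r (m y) ^ N) * volume (Metric.ball (0 : Euc N) 1) ≠ ⊤ :=
      fun y _ => ENNReal.mul_ne_top ENNReal.ofReal_ne_top measure_ball_lt_top.ne
    have h1 := ENNReal.toReal_mono (by rw [hvolQ]; exact ENNReal.ofReal_ne_top) hpack
    rw [hvolQ, ENNReal.toReal_ofReal (pow_nonneg hσ0.le N), ENNReal.toReal_sum hne_top] at h1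
    calc ∑ y ∈ F₁, r (m y) ^ N * κ
        = ∑ y ∈ F₁, (ENNReal.ofReal (r (m y) ^ N) *
            volume (Metric.ball (0 : Euc N) 1)).toReal := by
          refine Finset.sum_congr rfl fun y _ => ?_
          rw [ENNReal.toReal_mul, ENNReal.toReal_ofReal (pow_nonneg (hr_pos (m y)).le N)]
      _ ≤ σ^N := h1
  -- telescoping / double counting
  set ρf : ℕ → ℝ := fun k => r k ^ N with hρf_def
  have htel : ∀ y ∈ F₁, ρf (m y) - ρf 0
      = ∑ k ∈ Finset.Icc 1 K, (if k ≤ m y then ρf k - ρf (k-1) else 0) := by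
    intro y hy
    obtain ⟨hmy1, hmyK⟩ := hm_Icc y hy
    rw [Finset.sum_ite, Finset.sum_const_zero, add_zero]
    have hfilter : (Finset.Icc 1 K).filter (fun k => k ≤ m y) = Finset.Icc 1 (m y) := by
      ext k
      simp only [Finset.mem_filter, Finset.mem_Icc]
      constructor
      · rintro ⟨⟨h1, _⟩, h3⟩; exact ⟨h1, h3⟩
      · rintro ⟨h1, h3⟩; exact ⟨⟨h1, h3.trans hmyK⟩, h3⟩
    rw [hfilter]
    exact (telescope ρf (m y)).symm
  have hswap : ∑ y ∈ F₁, (ρf (m y) - ρf 0)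
      = ∑ k ∈ Finset.Icc 1 K, ((F k).card : ℝ) * (ρf k - ρf (k-1)) := by
    calc ∑ y ∈ F₁, (ρf (m y) - ρf 0)
        = ∑ y ∈ F₁, ∑ k ∈ Finset.Icc 1 K, (if k ≤ m y then ρf k - ρf (k-1) else 0) :=
          Finset.sum_congr rfl htel
      _ = ∑ k ∈ Finset.Icc 1 K, ∑ y ∈ F₁, (if k ≤ m y then ρf k - ρf (k-1) else 0) :=
          Finset.sum_comm
      _ = ∑ k ∈ Finset.Icc 1 K, ((F k).card : ℝ) * (ρf k - ρf (k-1)) := by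
          refine Finset.sum_congr rfl fun k hk => ?_
          obtain ⟨hk1, hkK⟩ := Finset.mem_Icc.1 hk
          have hfil : F₁.filter (fun y => k ≤ m y) = F k := by
            ext y
            simp only [hF_def, Finset.mem_filter]
            constructor
            · rintro ⟨hy, hky⟩
              exact ⟨hy, (hm_iff y hy k hk1 hkK).1 hky⟩
            · rintro ⟨hy, hyA⟩
              exact ⟨hy, (hm_iff y hy k hk1 hkK).2 hyA⟩
          rw [Finset.sum_ite, Finset.sum_const_zero, add_zero, hfil, Finset.sum_const,
            nsmul_eq_mul]
  -- per-scale lower bound on the telescoping increments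
  set β : ℝ := (N:ℝ)/10 * (4/15)^(N-1) with hβ_def
  have hβ0 : 0 < β := by positivity
  have hincr : ∀ k, 1 ≤ k → β * s k ^ N ≤ ρf k - ρf (k-1) := by
    intro k hk1
    obtain ⟨j, rfl⟩ : ∃ j, k = j + 1 := ⟨k - 1, by omega⟩
    simp only [hβ_def, hρf_def, hr_def, hs_def, Nat.add_sub_cancel]
    exact incr_bound hN hR0 j
  -- assemble the inequality
  have hfinal : (K:ℝ) * (β * (9/10*w)) ≤ 1 := by
    have hsum1 : ∑ y ∈ F₁, (ρf (m y) - ρf 0) ≤ ∑ y ∈ F₁, ρf (m y) := by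
      refine Finset.sum_le_sum fun y _ => ?_
      have : 0 ≤ ρf 0 := by rw [hρf_def]; exact pow_nonneg (hr_pos 0).le N
      linarith
    have hsum2 : κ * ∑ y ∈ F₁, ρf (m y) ≤ σ^N := by
      calc κ * ∑ y ∈ F₁, ρf (m y) = ∑ y ∈ F₁, ρf (m y) * κ := by
            rw [Finset.mul_sum]; exact Finset.sum_congr rfl fun y _ => mul_comm _ _
        _ ≤ σ^N := hsum_real
    have hsum3 : (K:ℝ) * (β * (9/10*w) * σ^N / κ)
        ≤ ∑ k ∈ Finset.Icc 1 K, ((F k).card : ℝ) * (ρf k - ρf (k-1)) := by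
      have hterm : ∀ k ∈ Finset.Icc 1 K,
          β * (9/10*w) * σ^N / κ ≤ ((F k).card : ℝ) * (ρf k - ρf (k-1)) := by
        intro k hk
        obtain ⟨hk1, hkK⟩ := Finset.mem_Icc.1 hk
        have h1 := hFcard k hk
        have h2 := hincr k hk1
        have hskN : (0:ℝ) < s k ^ N := pow_pos (hs_pos k) N
        have hb0 : (0:ℝ) ≤ β * s k ^ N := mul_nonneg hβ0.le hskN.le
        have hκne : κ ≠ 0 := ne_of_gt hκ0
        have hsne : s k ^ N ≠ 0 := ne_of_gt hskN
        calc β * (9/10*w) * σ^N / κ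
            = (9/10*w * σ^N / (s k ^ N * κ)) * (β * s k ^ N) := by
              field_simp
          _ ≤ ((F k).card : ℝ) * (ρf k - ρf (k-1)) := by
              exact mul_le_mul h1 h2 hb0 (Nat.cast_nonneg _)
      calc (K:ℝ) * (β * (9/10*w) * σ^N / κ)
          = ∑ _k ∈ Finset.Icc 1 K, β * (9/10*w) * σ^N / κ := by
            rw [Finset.sum_const, Nat.card_Icc, Nat.add_sub_cancel, nsmul_eq_mul]
        _ ≤ _ := Finset.sum_le_sum hterm
    have hchain : (K:ℝ) * (β * (9/10*w) * σ^N / κ) ≤ σ^N / κ := by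
      calc (K:ℝ) * (β * (9/10*w) * σ^N / κ)
          ≤ ∑ k ∈ Finset.Icc 1 K, ((F k).card : ℝ) * (ρf k - ρf (k-1)) := hsum3
        _ = ∑ y ∈ F₁, (ρf (m y) - ρf 0) := hswap.symm
        _ ≤ ∑ y ∈ F₁, ρf (m y) := hsum1
        _ ≤ σ^N / κ := by
            rw [le_div_iff₀ hκ0]
            calc (∑ y ∈ F₁, ρf (m y)) * κ = κ * ∑ y ∈ F₁, ρf (m y) := by ring
              _ ≤ σ^N := hsum2
    have hσκ : (0:ℝ) < σ^N / κ := div_pos (pow_pos hσ0 N) hκ0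
    have := hchain
    rw [show (K:ℝ) * (β * (9/10*w) * σ^N / κ) = ((K:ℝ) * (β * (9/10*w))) * (σ^N/κ) by ring]
      at this
    have h1 : ((K:ℝ) * (β * (9/10*w))) * (σ^N/κ) ≤ 1 * (σ^N/κ) := by
      rw [one_mul]; exact this
    exact (mul_le_mul_iff_of_pos_right hσκ).1 h1
  -- final numeric contradiction
  rw [hβ_def] at hfinal
  have hp15 : (0:ℝ) < (15/4:ℝ)^(N-1) := by positivity
  have hpP : (4/15:ℝ)^(N-1) * (15/4)^(N-1) = 1 := by rw [← mul_pow]; norm_num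
  have h50 := ineq50 (N-1)
  have h6N : (6:ℝ)^(N-1+1) = 6^N := by congr 1; omega
  rw [h6N] at h50
  have h1 := mul_le_mul_of_nonneg_right hfinal
    (le_of_lt (by positivity : (0:ℝ) < 100*(15/4:ℝ)^(N-1)/9))
  have h2 : (K:ℝ) * ((N:ℝ)/10 * (4/15)^(N-1) * (9/10*w)) * (100*(15/4:ℝ)^(N-1)/9)
      = (K:ℝ)*(w*(N:ℝ))*((4/15:ℝ)^(N-1) * (15/4)^(N-1)) := by ring
  rw [h2, hpP, mul_one, one_mul] at h1
  -- h1 : K*(w*N) ≤ 100*(15/4)^(N-1)/9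
  have hA : (K:ℝ)*(w*(N:ℝ)) ≤ 2*6^N := by
    have h3 : 100*(15/4:ℝ)^(N-1)/9 ≤ 2*6^N := by linarith only [h50]
    linarith only [h1, h3]
  have hKE : (K:ℝ)/4 ≤ E := by
    rw [hE_def, le_div_iff₀ (by positivity : (0:ℝ) < 2*w*(N:ℝ))]
    have heq : (K:ℝ)/4*(2*w*(N:ℝ)) = (K:ℝ)*(w*(N:ℝ))/2 := by ring
    rw [heq]
    linarith only [hA]
  have hlog1 : Real.log (c/3) < ((K:ℝ)+1) * Real.log (5/4) := by
    have h1 : Real.log (c/3) < Real.log ((5/4:ℝ)^(K+1)) :=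
      Real.log_lt_log (by linarith only [hc4]) hKgt
    rwa [Real.log_pow, Nat.cast_add, Nat.cast_one] at h1
  have hlog2 : ((K:ℝ)+1) * Real.log (5/4) ≤ ((K:ℝ)+1) / 4 := by
    have hK0 : (0:ℝ) ≤ (K:ℝ)+1 := by positivity
    have h4 := mul_le_mul_of_nonneg_left log_five_quarters hK0
    linarith only [h4]
  have hlog3 : Real.log (4/3) + E ≤ Real.log (c/3) := by
    have h1 : (4/3:ℝ) * Real.exp E ≤ c/3 := by linarith only [hcge]
    have h2 : Real.log ((4/3:ℝ) * Real.exp E) ≤ Real.log (c/3) :=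
      Real.log_le_log (by positivity) h1
    rwa [Real.log_mul (by norm_num) (Real.exp_ne_zero E), Real.log_exp] at h2
  have hEltK : E < (K:ℝ)/4 := by
    have h5 := log_four_thirds
    linarith only [hlog1, hlog2, hlog3, h5]
  linarith only [hEltK, hKE]

end Key


/-- If a Delone set Λ satisfies (PW) (with weight `w = wPW Λ`) and (U),
and `P = (x₀, R)` is a ball pattern with `R ≥ 3`, then for every `x ∈ L_P` the inner
radius of the Voronoi cell of `x` in `L_P` is at most `c·R`, where
`c = max(2, 4·exp(6^N/(2wN)))`. -/
theorem inner_radius_bound {N : ℕ} (hN : 0 < N) (Λ : Set (Euc N))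
    (hΛ : IsDelone Λ) (hPW : PW Λ) (hU : URW Λ)
    (x₀ : Euc N) (hx₀ : x₀ ∈ Λ) (R : ℝ) (hR : 3 ≤ R) :
    ∀ x ∈ locSet Λ x₀ R,
      rIn x (voronoiCell (locSet Λ x₀ R) x) ≤
        ENNReal.ofReal
          (max 2 (4 * Real.exp ((6 : ℝ) ^ N / (2 * wPW Λ * N))) * R) := by
  intro x hx
  set c : ℝ := max 2 (4 * Real.exp ((6:ℝ)^N / (2 * wPW Λ * N))) with hc_def
  rw [rIn]
  refine sSup_le ?_
  intro r' hr'
  by_contra hgt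
  push_neg at hgt
  have hsub : EMetric.closedBall x (ENNReal.ofReal (c*R)) ⊆
      voronoiCell (locSet Λ x₀ R) x :=
    (EMetric.closedBall_subset_closedBall hgt.le).trans hr'
  have hiso : ∀ z ∈ locSet Λ x₀ R, dist z x ≤ c*R → z = x := by
    intro z hz hd
    have hz' : z ∈ EMetric.closedBall x (ENNReal.ofReal (c*R)) := by
      show edist z x ≤ _; rw [edist_dist]
      exact ENNReal.ofReal_le_ofReal hd
    have h1 := (hsub hz') z hz
    rw [dist_self] at h1
    exact eq_of_dist_eq_zero (le_antisymm h1 dist_nonneg)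
  exact key hN Λ hPW x₀ R hR x hx c (le_max_right _ _) hiso
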